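/- (Weak coindex bound for Gap Hamming Distance.) Let n, k ∈ ℕ with 2k < n. Then there exists a continuous map f from the unit sphere S^k (the set {x ∈ EuclideanSpace ℝ (Fin (k+1)) : ‖x‖ = 1}) into ℝ^({0,1}^n) such that f(x) ∈ |S(GHD_k^n)| and f(−x) = −f(x) for all x ∈ S^k. In particular coind_{ℤ₂}(S(GHD_k^n)) ≥ k. -/

import Mathlib

open scoped Pointwise

/-- The realized simplex `σ_x` of the Gap Hamming Distance sign complex:
the convex hull of `{e_y : d_H(x,y) ≤ k} ∪ {-e_y : d_H(x,y) ≥ n - k}`. -/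
noncomputable def ghdSimplex (n k : ℕ) (x : Fin n → Bool) :
    Set ((Fin n → Bool) → ℝ) :=
  convexHull ℝ
    ({v | ∃ y, hammingDist x y ≤ k ∧ v = Pi.single y (1 : ℝ)} ∪
     {v | ∃ y, n - k ≤ hammingDist x y ∧ v = -Pi.single y (1 : ℝ)})

/-- The crosspolytope realization `|S(GHD_k^n)|`. -/
noncomputable def ghdRealization (n k : ℕ) : Set ((Fin n → Bool) → ℝ) :=
  ⋃ x, (ghdSimplex n k x ∪ -(ghdSimplex n k x))


open Finset

noncomputable section GHDaux

/-- cumulative sums of squares -/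
def ghA {k : ℕ} (x : Fin (k+1) → ℝ) (i : ℕ) : ℝ :=
  ∑ l : Fin (k+1), if (l : ℕ) < i then (x l)^2 else 0

def ghClamp (s t u : ℝ) : ℝ := min (max u s) t

def ghW (n : ℕ) {k : ℕ} (x : Fin (k+1) → ℝ) (j : Fin n) : ℝ :=
  n * ∑ i : Fin (k+1),
    (ghClamp ((j:ℝ)/n) (((j:ℝ)+1)/n) (ghA x ((i:ℕ)+1))
      - ghClamp ((j:ℝ)/n) (((j:ℝ)+1)/n) (ghA x ((i:ℕ)+1) - (max (x i) 0)^2))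

def ghQ (n : ℕ) {k : ℕ} (x : Fin (k+1) → ℝ) (y : Fin n → Bool) : ℝ :=
  ∏ j : Fin n, if y j then ghW n x j else 1 - ghW n x j

def ghF (n : ℕ) {k : ℕ} (x : Fin (k+1) → ℝ) : (Fin n → Bool) → ℝ :=
  ∑ y : Fin n → Bool,
    (ghQ n x y / 2) • (Pi.single y (1:ℝ) - Pi.single (fun j => !(y j)) (1:ℝ))

variable {k n : ℕ} (x : Fin (k+1) → ℝ)

lemma ghA_zero : ghA x 0 = 0 := by simp [ghA]

lemma ghA_top : ghA x (k+1) = ∑ l, (x l)^2 := by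
  unfold ghA
  exact Finset.sum_congr rfl fun l _ => if_pos l.isLt

lemma ghA_succ (i : Fin (k+1)) : ghA x ((i:ℕ)+1) = ghA x i + (x i)^2 := by
  unfold ghA
  have : ∀ l : Fin (k+1), (if (l:ℕ) < (i:ℕ)+1 then (x l)^2 else 0)
      = (if (l:ℕ) < (i:ℕ) then (x l)^2 else 0) + (if l = i then (x l)^2 else 0) := by
    intro l
    rcases lt_trichotomy (l:ℕ) (i:ℕ) with h | h | h
    · rw [if_pos (by omega), if_pos h, if_neg (by intro he; subst he; omega)]
      ring
    · rw [if_pos (by omega), if_neg (by omega), if_pos (by exact Fin.ext h)]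
      ring
    · rw [if_neg (by omega), if_neg (by omega), if_neg (by intro he; subst he; omega)]
      ring
  rw [Finset.sum_congr rfl fun l _ => this l, Finset.sum_add_distrib,
    Finset.sum_ite_eq' univ i (fun l => (x l)^2), if_pos (mem_univ i)]

lemma ghA_mono : Monotone (ghA x) := by
  intro i i' h
  apply Finset.sum_le_sum
  intro l _
  split_ifs with h1 h2
  · exact le_refl _
  · exact absurd (lt_of_lt_of_le h1 h) h2
  · exact sq_nonneg _
  · exact le_refl _

lemma ghA_neg (i : ℕ) : ghA (-x) i = ghA x i := by
  simp [ghA]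

lemma ghClamp_mono (s t : ℝ) : Monotone (ghClamp s t) := fun u v h =>
  min_le_min (max_le_max h le_rfl) le_rfl

lemma ghClamp_of_le {s t u : ℝ} (h : u ≤ s) (hst : s ≤ t) : ghClamp s t u = s := by
  rw [ghClamp, max_eq_right h, min_eq_left hst]

lemma ghClamp_of_ge {s t u : ℝ} (h : t ≤ u) : ghClamp s t u = t :=
  min_eq_right (le_max_of_le_left h)

lemma max_sq_le (a : ℝ) : (max a 0)^2 ≤ a^2 := by
  rcases le_total a 0 with h | h
  · rw [max_eq_right h]
    simpa using sq_nonneg a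
  · rw [max_eq_left h]

end GHDaux

section GHDaux2
open Finset
variable {k n : ℕ} (x : Fin (k+1) → ℝ)

lemma cell_s_nonneg (j : Fin n) : 0 ≤ (j:ℝ)/n := by positivity

lemma cell_s_lt_t (hn : 0 < n) (j : Fin n) : (j:ℝ)/n < ((j:ℝ)+1)/n := by
  have : (0:ℝ) < n := Nat.cast_pos.mpr hn
  apply div_lt_div_of_pos_right ?_ this
  linarith

lemma cell_t_le_one (j : Fin n) : ((j:ℝ)+1)/n ≤ 1 := by
  have hn : (0:ℝ) < n := Nat.cast_pos.mpr (Nat.pos_of_ne_zero (by rintro rfl; exact j.elim0))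
  rw [div_le_one hn]
  have : (j:ℕ) + 1 ≤ n := j.isLt
  exact_mod_cast this

/-- The telescoping identity on the sphere. -/
lemma ghTelescope (hx : ∑ l, (x l)^2 = 1) (hn : 0 < n) (j : Fin n) :
    ∑ i : Fin (k+1), (ghClamp ((j:ℝ)/n) (((j:ℝ)+1)/n) (ghA x ((i:ℕ)+1))
      - ghClamp ((j:ℝ)/n) (((j:ℝ)+1)/n) (ghA x (i:ℕ)))
      = ((j:ℝ)+1)/n - (j:ℝ)/n := by
  rw [Fin.sum_univ_eq_sum_range
      (fun m => ghClamp ((j:ℝ)/n) (((j:ℝ)+1)/n) (ghA x (m+1))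
        - ghClamp ((j:ℝ)/n) (((j:ℝ)+1)/n) (ghA x m)) (k+1),
    Finset.sum_range_sub (fun m => ghClamp ((j:ℝ)/n) (((j:ℝ)+1)/n) (ghA x m)) (k+1)]
  rw [ghA_zero, ghA_top, hx]
  rw [ghClamp_of_ge (cell_t_le_one j),
    ghClamp_of_le (cell_s_nonneg j) (le_of_lt (cell_s_lt_t hn j))]

lemma ghTerm_nonneg (j : Fin n) (i : Fin (k+1)) :
    0 ≤ ghClamp ((j:ℝ)/n) (((j:ℝ)+1)/n) (ghA x ((i:ℕ)+1))
      - ghClamp ((j:ℝ)/n) (((j:ℝ)+1)/n) (ghA x ((i:ℕ)+1) - (max (x i) 0)^2) := by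
  apply sub_nonneg.mpr
  apply ghClamp_mono
  have := sq_nonneg (max (x i) 0)
  linarith

lemma ghTerm_le (j : Fin n) (i : Fin (k+1)) :
    ghClamp ((j:ℝ)/n) (((j:ℝ)+1)/n) (ghA x ((i:ℕ)+1))
      - ghClamp ((j:ℝ)/n) (((j:ℝ)+1)/n) (ghA x ((i:ℕ)+1) - (max (x i) 0)^2)
    ≤ ghClamp ((j:ℝ)/n) (((j:ℝ)+1)/n) (ghA x ((i:ℕ)+1))
      - ghClamp ((j:ℝ)/n) (((j:ℝ)+1)/n) (ghA x (i:ℕ)) := by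
  apply sub_le_sub_left
  apply ghClamp_mono
  have h1 := max_sq_le (x i)
  have h2 := ghA_succ x i
  linarith

lemma ghW_nonneg (j : Fin n) : 0 ≤ ghW n x j := by
  apply mul_nonneg (Nat.cast_nonneg n)
  exact Finset.sum_nonneg fun i _ => ghTerm_nonneg x j i

lemma ghW_le_one (hx : ∑ l, (x l)^2 = 1) (hn : 0 < n) (j : Fin n) :
    ghW n x j ≤ 1 := by
  have hsum : ∑ i : Fin (k+1), (ghClamp ((j:ℝ)/n) (((j:ℝ)+1)/n) (ghA x ((i:ℕ)+1))
      - ghClamp ((j:ℝ)/n) (((j:ℝ)+1)/n) (ghA x ((i:ℕ)+1) - (max (x i) 0)^2))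
      ≤ ((j:ℝ)+1)/n - (j:ℝ)/n := by
    rw [← ghTelescope x hx hn j]
    exact Finset.sum_le_sum fun i _ => ghTerm_le x j i
  have hnr : (0:ℝ) < n := Nat.cast_pos.mpr hn
  have : ((j:ℝ)+1)/n - (j:ℝ)/n = 1/n := by field_simp; ring
  rw [ghW]
  calc (n:ℝ) * _ ≤ (n:ℝ) * (1/n) := by
        rw [← this]; exact mul_le_mul_of_nonneg_left hsum (Nat.cast_nonneg n)
    _ = 1 := by field_simp

lemma ghW_neg (hx : ∑ l, (x l)^2 = 1) (hn : 0 < n) (j : Fin n) :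
    ghW n (-x) j = 1 - ghW n x j := by
  have hterm : ∀ i : Fin (k+1),
      (ghClamp ((j:ℝ)/n) (((j:ℝ)+1)/n) (ghA (-x) ((i:ℕ)+1))
        - ghClamp ((j:ℝ)/n) (((j:ℝ)+1)/n) (ghA (-x) ((i:ℕ)+1) - (max ((-x) i) 0)^2))
      = (ghClamp ((j:ℝ)/n) (((j:ℝ)+1)/n) (ghA x ((i:ℕ)+1))
          - ghClamp ((j:ℝ)/n) (((j:ℝ)+1)/n) (ghA x (i:ℕ)))
        - (ghClamp ((j:ℝ)/n) (((j:ℝ)+1)/n) (ghA x ((i:ℕ)+1))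
          - ghClamp ((j:ℝ)/n) (((j:ℝ)+1)/n) (ghA x ((i:ℕ)+1) - (max (x i) 0)^2)) := by
    intro i
    simp only [ghA_neg]
    have hnx : (-x) i = -(x i) := rfl
    rcases le_total (x i) 0 with h | h
    · rw [hnx, max_eq_left (by linarith), max_eq_right h]
      have : ghA x ((i:ℕ)+1) - (-(x i))^2 = ghA x (i:ℕ) := by
        have := ghA_succ x i; nlinarith [ghA_succ x i]
      rw [this]
      ring_nf
    · rw [hnx, max_eq_right (by linarith), max_eq_left h]
      have : ghA x ((i:ℕ)+1) - (x i)^2 = ghA x (i:ℕ) := by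
        have := ghA_succ x i; linarith
      rw [this]
      ring_nf
  rw [ghW, Finset.sum_congr rfl fun i _ => hterm i, Finset.sum_sub_distrib,
    ghTelescope x hx hn j]
  have hnr : (0:ℝ) < n := Nat.cast_pos.mpr hn
  rw [ghW]
  field_simp
  ring

end GHDaux2

section GHDaux3
open Finset
variable {k n : ℕ} (x : Fin (k+1) → ℝ)

lemma ghW_zero_or_one (hx : ∑ l, (x l)^2 = 1) (hn : 0 < n) (j : Fin n)
    (H : ∀ l : ℕ, 1 ≤ l → l ≤ k → ghA x l ≤ (j:ℝ)/n ∨ ((j:ℝ)+1)/n ≤ ghA x l) :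
    ghW n x j = 0 ∨ ghW n x j = 1 := by
  set s : ℝ := (j:ℝ)/n with hs
  set t : ℝ := ((j:ℝ)+1)/n with ht
  have hst : s < t := cell_s_lt_t hn j
  have hc : ∀ l : ℕ, l ≤ k+1 → ghClamp s t (ghA x l) = s ∨ ghClamp s t (ghA x l) = t := by
    intro l hl
    rcases Nat.eq_zero_or_pos l with rfl | hl1
    · left; rw [ghA_zero, ghClamp_of_le (cell_s_nonneg j) hst.le]
    rcases eq_or_lt_of_le hl with rfl | hlk
    · right; rw [ghA_top, hx, ghClamp_of_ge (cell_t_le_one j)]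
    rcases H l hl1 (by omega) with h | h
    · left; exact ghClamp_of_le h hst.le
    · right; exact ghClamp_of_ge h
  set T : Fin (k+1) → ℝ := fun i =>
    ghClamp s t (ghA x ((i:ℕ)+1)) - ghClamp s t (ghA x ((i:ℕ)+1) - (max (x i) 0)^2) with hT
  have hTcases : ∀ i : Fin (k+1), T i = 0 ∨ T i = t - s := by
    intro i
    have h1 := hc ((i:ℕ)+1) i.isLt
    have hD : ghClamp s t (ghA x ((i:ℕ)+1) - (max (x i) 0)^2) = s ∨
        ghClamp s t (ghA x ((i:ℕ)+1) - (max (x i) 0)^2) = t := by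
      rcases le_total (x i) 0 with h | h
      · rw [max_eq_right h]
        simpa using h1
      · rw [max_eq_left h]
        have : ghA x ((i:ℕ)+1) - (x i)^2 = ghA x (i:ℕ) := by
          have := ghA_succ x i; linarith
        rw [this]
        exact hc (i:ℕ) (by omega)
    have hTnn : 0 ≤ T i := ghTerm_nonneg x j i
    have hTval : T i = ghClamp s t (ghA x ((i:ℕ)+1))
        - ghClamp s t (ghA x ((i:ℕ)+1) - (max (x i) 0)^2) := rfl
    rcases h1 with h1 | h1 <;> rcases hD with hD | hD
    · left; rw [hTval, h1, hD]; ring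
    · exfalso
      rw [hTval, h1, hD] at hTnn
      linarith
    · right; rw [hTval, h1, hD]
    · left; rw [hTval, h1, hD]; ring
  have hnr : (0:ℝ) < n := Nat.cast_pos.mpr hn
  by_cases hall : ∀ i, T i = 0
  · left
    rw [ghW]
    rw [Finset.sum_eq_zero fun i _ => hall i, mul_zero]
  · right
    push_neg at hall
    obtain ⟨i0, hi0⟩ := hall
    have hTi0 : T i0 = t - s := (hTcases i0).resolve_left hi0
    have hup : ∑ i, T i ≤ t - s := by
      calc ∑ i, T i ≤ ∑ i : Fin (k+1), (ghClamp s t (ghA x ((i:ℕ)+1)) - ghClamp s t (ghA x (i:ℕ)))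
            := Finset.sum_le_sum fun i _ => ghTerm_le x j i
        _ = t - s := ghTelescope x hx hn j
    have hlow : t - s ≤ ∑ i, T i := by
      rw [← hTi0]
      exact Finset.single_le_sum (fun i _ => ghTerm_nonneg x j i) (mem_univ i0)
    have hsum : ∑ i, T i = t - s := le_antisymm hup hlow
    rw [ghW, hsum]
    have : t - s = 1/(n:ℝ) := by rw [ht, hs]; field_simp; ring
    rw [this]
    field_simp

lemma ghW_frac_breakpoint (hx : ∑ l, (x l)^2 = 1) (hn : 0 < n) (j : Fin n)
    (h0 : 0 < ghW n x j) (h1 : ghW n x j < 1) :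
    ∃ l : ℕ, 1 ≤ l ∧ l ≤ k ∧ (j:ℝ)/n < ghA x l ∧ ghA x l < ((j:ℝ)+1)/n := by
  by_contra hcon
  push_neg at hcon
  have H : ∀ l : ℕ, 1 ≤ l → l ≤ k → ghA x l ≤ (j:ℝ)/n ∨ ((j:ℝ)+1)/n ≤ ghA x l := by
    intro l hl1 hlk
    rcases le_or_gt (ghA x l) ((j:ℝ)/n) with h | h
    · exact Or.inl h
    · exact Or.inr (hcon l hl1 hlk h)
  rcases ghW_zero_or_one x hx hn j H with h | h <;> linarith

end GHDaux3

section GHDaux4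
open Finset
variable {k n : ℕ} (x : Fin (k+1) → ℝ)

lemma ghQ_nonneg (hx : ∑ l, (x l)^2 = 1) (hn : 0 < n) (y : Fin n → Bool) :
    0 ≤ ghQ n x y := by
  apply Finset.prod_nonneg
  intro j _
  by_cases hyj : y j = true
  · simp only [if_pos hyj]
    exact ghW_nonneg x j
  · simp only [if_neg hyj]
    have := ghW_le_one x hx hn j
    linarith

lemma ghQ_sum : ∑ y : Fin n → Bool, ghQ n x y = 1 := by
  have h1 : ∀ j : Fin n, ∑ b : Bool, (if b then ghW n x j else 1 - ghW n x j) = 1 := by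
    intro j; rw [Fintype.sum_bool]; simp
  have h2 := Finset.prod_univ_sum (fun _ : Fin n => (univ : Finset Bool))
    (fun j b => if b then ghW n x j else 1 - ghW n x j)
  rw [Fintype.piFinset_univ] at h2
  have h3 : ∏ j : Fin n, ∑ b : Bool, (if b then ghW n x j else 1 - ghW n x j) = 1 := by
    rw [Finset.prod_congr rfl fun j _ => h1 j]
    exact Finset.prod_const_one
  rw [h2] at h3
  unfold ghQ
  exact h3

lemma ghQ_neg (hx : ∑ l, (x l)^2 = 1) (hn : 0 < n) (y : Fin n → Bool) :
    ghQ n (-x) y = ghQ n x (fun j => !(y j)) := by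
  unfold ghQ
  apply Finset.prod_congr rfl
  intro j _
  rw [ghW_neg x hx hn j]
  cases hyj : y j <;> simp [hyj] <;> try ring

lemma ghF_neg (hx : ∑ l, (x l)^2 = 1) (hn : 0 < n) :
    ghF n (-x) = - ghF n x := by
  have hinv : Function.Involutive (fun (y : Fin n → Bool) => fun j => !(y j)) := by
    intro y; funext j; simp
  let e : Equiv.Perm (Fin n → Bool) := hinv.toPerm _
  unfold ghF
  rw [← Finset.sum_neg_distrib]
  apply Fintype.sum_equiv e
  intro y
  have he : e y = fun j => !(y j) := rfl
  rw [he, ghQ_neg x hx hn y]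
  have h4 : (fun j => !((fun j' => !(y j')) j)) = y := by
    funext j; simp
  rw [h4, smul_sub, smul_sub]
  abel

end GHDaux4

section GHDaux5
open Finset
variable {k n : ℕ} (x : Fin (k+1) → ℝ)

lemma hammingDist_not_right (z y : Fin n → Bool) :
    hammingDist z (fun j => !(y j)) = n - hammingDist z y := by
  classical
  have h1 : ({j | z j ≠ !(y j)} : Finset (Fin n))
      = ({j | ¬(z j ≠ y j)} : Finset (Fin n)) := by
    ext j
    simp only [mem_filter, mem_univ, true_and, Set.mem_setOf_eq]
    cases z j <;> cases y j <;> simp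
  have h2 := Finset.card_filter_add_card_filter_not
    (s := (univ : Finset (Fin n))) (p := fun j => z j ≠ y j)
  unfold hammingDist
  rw [h1]
  simp only [Finset.card_univ, Fintype.card_fin] at h2
  omega

/-- The support of `ghQ` is within Hamming distance `k` of the rounding `z`. -/
lemma ghDist_le (hx : ∑ l, (x l)^2 = 1) (hn : 0 < n) (y : Fin n → Bool)
    (hy : ghQ n x y ≠ 0) :
    hammingDist y (fun j => decide ((1:ℝ)/2 ≤ ghW n x j)) ≤ k := by
  classical
  set z : Fin n → Bool := fun j => decide ((1:ℝ)/2 ≤ ghW n x j) with hz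
  have hfac : ∀ j : Fin n, (if y j then ghW n x j else 1 - ghW n x j) ≠ 0 := by
    intro j
    exact Finset.prod_ne_zero_iff.mp hy j (mem_univ j)
  have hmis : ∀ j : Fin n, y j ≠ z j → 0 < ghW n x j ∧ ghW n x j < 1 := by
    intro j hj
    have hf := hfac j
    have hw0 := ghW_nonneg x j
    have hw1 := ghW_le_one x hx hn j
    cases hyj : y j
    · rw [hyj] at hf hj
      rw [if_neg (by decide : ¬ ((false : Bool) = true))] at hf
      have hzj : z j = true := by
        cases hzj : z j
        · rw [hzj] at hj; exact absurd rfl hj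
        · rfl
      have hhalf : (1:ℝ)/2 ≤ ghW n x j := of_decide_eq_true hzj
      refine ⟨by linarith, ?_⟩
      rcases lt_or_eq_of_le hw1 with h | h
      · exact h
      · exact absurd (by linarith : (1:ℝ) - ghW n x j = 0) hf
    · rw [hyj] at hf hj
      rw [if_pos rfl] at hf
      have hzj : z j = false := by
        cases hzj : z j
        · rfl
        · rw [hzj] at hj; exact absurd rfl hj
      have hhalf : ¬ ((1:ℝ)/2 ≤ ghW n x j) := of_decide_eq_false hzj
      refine ⟨?_, by linarith⟩
      rcases lt_or_eq_of_le hw0 with h | h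
      · exact h
      · exact absurd h.symm hf
  -- choose breakpoints
  have key : ∀ j : Fin n, ∃ l : ℕ, y j ≠ z j →
      1 ≤ l ∧ l ≤ k ∧ (j:ℝ)/n < ghA x l ∧ ghA x l < ((j:ℝ)+1)/n := by
    intro j
    by_cases hj : y j ≠ z j
    · obtain ⟨l, h1, h2, h3, h4⟩ := ghW_frac_breakpoint x hx hn j (hmis j hj).1 (hmis j hj).2
      exact ⟨l, fun _ => ⟨h1, h2, h3, h4⟩⟩
    · exact ⟨0, fun h => absurd h hj⟩
  choose ℓ hℓ using key
  have hnr : (0:ℝ) < n := Nat.cast_pos.mpr hn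
  calc hammingDist y z = ({j | y j ≠ z j} : Finset (Fin n)).card := rfl
    _ ≤ (Finset.Icc 1 k).card := by
        apply Finset.card_le_card_of_injOn ℓ
        · intro j hj
          have := hℓ j (by simpa using hj)
          exact Finset.mem_Icc.mpr ⟨this.1, this.2.1⟩
        · intro j1 hj1 j2 hj2 hjeq
          have h1 := hℓ j1 (by simpa using hj1)
          have h2 := hℓ j2 (by simpa using hj2)
          rw [hjeq] at h1
          have a1 : (j1:ℝ)/n < ((j2:ℝ)+1)/n := lt_trans h1.2.2.1 h2.2.2.2
          have a2 : (j2:ℝ)/n < ((j1:ℝ)+1)/n := lt_trans h2.2.2.1 h1.2.2.2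
          have b1 : (j1:ℝ) < (j2:ℝ)+1 := by
            have := (div_lt_div_iff_of_pos_right hnr).mp a1
            linarith
          have b2 : (j2:ℝ) < (j1:ℝ)+1 := by
            have := (div_lt_div_iff_of_pos_right hnr).mp a2
            linarith
          have c1 : (j1:ℕ) < (j2:ℕ)+1 := by exact_mod_cast b1
          have c2 : (j2:ℕ) < (j1:ℕ)+1 := by exact_mod_cast b2
          exact Fin.ext (by omega)
    _ = k := by simp [Nat.card_Icc]

lemma cont_ghA (m : ℕ) :
    Continuous fun x : EuclideanSpace ℝ (Fin (k+1)) => ghA (fun i => x i) m := by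
  unfold ghA
  apply continuous_finset_sum
  intro l _
  by_cases h : (l:ℕ) < m
  · simp only [if_pos h]
    exact ((continuous_apply l).comp (PiLp.continuous_ofLp 2 _)).pow 2
  · simp only [if_neg h]
    exact continuous_const

lemma cont_ghW (j : Fin n) :
    Continuous fun x : EuclideanSpace ℝ (Fin (k+1)) => ghW n (fun i => x i) j := by
  unfold ghW
  apply Continuous.mul continuous_const
  apply continuous_finset_sum
  intro i _
  apply Continuous.sub
  · exact ((cont_ghA _).max continuous_const).min continuous_const
  · exact ((((cont_ghA _).sub ((((continuous_apply i).comp (PiLp.continuous_ofLp 2 _)).max continuous_const).pow 2)).max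
      continuous_const).min continuous_const)

lemma cont_ghQ (y : Fin n → Bool) :
    Continuous fun x : EuclideanSpace ℝ (Fin (k+1)) => ghQ n (fun i => x i) y := by
  unfold ghQ
  apply continuous_finset_prod
  intro j _
  cases hyj : y j
  · simp only [hyj, Bool.false_eq_true, if_false]
    exact continuous_const.sub (cont_ghW j)
  · simp only [hyj, if_true]
    exact cont_ghW j

lemma cont_ghF :
    Continuous fun x : EuclideanSpace ℝ (Fin (k+1)) => ghF n (fun i => x i) := by
  unfold ghF
  apply continuous_finset_sum
  intro y _
  exact ((cont_ghQ y).div_const 2).smul continuous_const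

end GHDaux5

section GHDsphere
open Finset
lemma ghSphere_sum {k : ℕ} (x : EuclideanSpace ℝ (Fin (k+1)))
    (hxs : x ∈ Metric.sphere (0 : EuclideanSpace ℝ (Fin (k+1))) 1) :
    ∑ l, (x l)^2 = 1 := by
  have h1 : ‖x‖ = 1 := mem_sphere_zero_iff_norm.mp hxs
  rw [EuclideanSpace.norm_eq] at h1
  have h2 := Real.sqrt_eq_one.mp h1
  simpa [Real.norm_eq_abs, sq_abs] using h2

end GHDsphere

/-- Weak coindex bound for Gap Hamming Distance: there is a ℤ₂-equivariant
continuous map `S^k → |S(GHD_k^n)|`, i.e. `coind_{ℤ₂}(S(GHD_k^n)) ≥ k`. -/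
theorem ghd_coindex_weak (n k : ℕ) (h : 2 * k < n) :
    ∃ f : EuclideanSpace ℝ (Fin (k + 1)) → ((Fin n → Bool) → ℝ),
      ContinuousOn f (Metric.sphere (0 : EuclideanSpace ℝ (Fin (k + 1))) 1) ∧
      (∀ x ∈ Metric.sphere (0 : EuclideanSpace ℝ (Fin (k + 1))) 1,
        f x ∈ ghdRealization n k) ∧
      (∀ x ∈ Metric.sphere (0 : EuclideanSpace ℝ (Fin (k + 1))) 1,
        f (-x) = -f x) := by
  classical
  have hn : 0 < n := by omega
  refine ⟨fun x => ghF n (fun i => x i), cont_ghF.continuousOn, ?_, ?_⟩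
  · intro x hxs
    have hx : ∑ l, (x l)^2 = 1 := ghSphere_sum x hxs
    set x' : Fin (k+1) → ℝ := fun i => x i with hx'
    have hx2 : ∑ l, (x' l)^2 = 1 := hx
    set z : Fin n → Bool := fun j => decide ((1:ℝ)/2 ≤ ghW n x' j) with hz
    set t : Finset (Fin n → Bool) := univ.filter (fun y => ghQ n x' y ≠ 0) with ht
    have hq0 : ∀ y, 0 ≤ ghQ n x' y := ghQ_nonneg x' hx2 hn
    have hsum1 : ∑ y ∈ t, ghQ n x' y = 1 := by
      rw [ht, Finset.sum_filter_ne_zero]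
      exact ghQ_sum x'
    have hdist : ∀ y ∈ t, hammingDist z y ≤ k := by
      intro y hy
      rw [hammingDist_comm]
      exact ghDist_le x' hx2 hn y (by simpa [ht] using hy)
    have hrepr : ghF n x' = ∑ p ∈ t ×ˢ (univ : Finset Bool), (ghQ n x' p.1 / 2) •
        (if p.2 then (Pi.single p.1 (1:ℝ) : (Fin n → Bool) → ℝ)
         else -(Pi.single (fun j => !(p.1 j)) (1:ℝ))) := by
      rw [Finset.sum_product]
      unfold ghF
      have hzero : ∀ y ∈ (univ : Finset (Fin n → Bool)), y ∉ t →
          (ghQ n x' y / 2) •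
            ((Pi.single y (1:ℝ) - Pi.single (fun j => !(y j)) (1:ℝ)) : (Fin n → Bool) → ℝ)
            = 0 := by
        intro y _ hy
        have hq : ghQ n x' y = 0 := by
          by_contra hq
          exact hy (by simp [ht, hq])
        rw [hq]
        simp
      rw [← Finset.sum_subset (Finset.filter_subset _ univ) hzero]
      apply Finset.sum_congr rfl
      intro y _
      rw [Fintype.sum_bool]
      simp only [if_true, Bool.false_eq_true, if_false]
      rw [smul_sub, smul_neg, sub_eq_add_neg]
    show ghF n x' ∈ ghdRealization n k
    rw [ghdRealization]
    apply Set.mem_iUnion.mpr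
    refine ⟨z, Set.mem_union_left _ ?_⟩
    rw [ghdSimplex, hrepr]
    apply Convex.sum_mem (convex_convexHull ℝ _)
    · intro p _
      exact div_nonneg (hq0 p.1) (by norm_num)
    · rw [Finset.sum_product]
      have hb : ∀ y ∈ t, ∑ _b : Bool, ghQ n x' y / 2 = ghQ n x' y := by
        intro y _
        rw [Fintype.sum_bool]
        ring
      rw [Finset.sum_congr rfl hb, hsum1]
    · intro p hp
      have hp1 : p.1 ∈ t := (Finset.mem_product.mp hp).1
      apply subset_convexHull
      rcases Bool.eq_false_or_eq_true p.2 with hb | hb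
      · rw [hb, if_pos rfl]
        left
        exact ⟨p.1, hdist p.1 hp1, rfl⟩
      · rw [hb, if_neg (by decide : ¬ ((false : Bool) = true))]
        right
        exact ⟨fun j => !(p.1 j), by
          rw [hammingDist_not_right]
          exact Nat.sub_le_sub_left (hdist p.1 hp1) n, rfl⟩
  · intro x hxs
    have hx : ∑ l, (x l)^2 = 1 := ghSphere_sum x hxs
    have hneg : (fun i => (-x) i) = -(fun i => x i) := by
      funext i
      simp only [PiLp.neg_apply, Pi.neg_apply]
    show ghF n (fun i => (-x) i) = - ghF n (fun i => x i)
    rw [hneg]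
    exact ghF_neg _ hx hn
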